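/- Let $k : V \times V \to \mathbb{R}$ be a strictly positive kernel (all finite Gram matrix determinants are positive), $x \in V$, $D_F = \det K_F$ and $D'_F$ the determinant of the minor of $K_F$ obtained by deleting the row and column indexed by $x$. Then $\delta_x \in \mathscr{H}$ if and only if $\sup_{F} D'_F / D_F < \infty$, where the supremum is over finite subsets $F \ni x$. -/

import Mathlib

open Matrix

section Aux

variable {V : Type*} {H : Type*} [DecidableEq V]
  [NormedAddCommGroup H] [InnerProductSpace ℝ H]

noncomputable def gramMat (k : V → V → ℝ) (F : Finset V) : Matrix F F ℝ :=
  Matrix.of fun i j => k i j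

noncomputable def deltaVec (F : Finset V) (x : V) : F → ℝ :=
  fun j => if (j : V) = x then 1 else 0

noncomputable def coeffs (k : V → V → ℝ) (F : Finset V) (x : V) : F → ℝ :=
  (gramMat k F)⁻¹ *ᵥ deltaVec F x

noncomputable def interp (k : V → V → ℝ) (K : V → H) (F : Finset V) (x : V) : H :=
  ∑ i : F, coeffs k F x i • K i

variable {k : V → V → ℝ} {K : V → H}

lemma inner_interp (hk : ∀ y z, (inner ℝ (K y) (K z) : ℝ) = k y z)
    {F : Finset V} (hdet : (gramMat k F).det ≠ 0) (x : V) (z : F) :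
    (inner ℝ (K z) (interp k K F x) : ℝ) = deltaVec F x z := by
  have h1 : (inner ℝ (K (z:V)) (interp k K F x) : ℝ)
      = ∑ i : F, gramMat k F z i * coeffs k F x i := by
    simp [interp, inner_sum, real_inner_smul_right, hk, gramMat, mul_comm]
  have h2 : ∑ i : F, gramMat k F z i * coeffs k F x i
      = (gramMat k F *ᵥ coeffs k F x) z := by
    simp [Matrix.mulVec, dotProduct]
  rw [h1, h2, coeffs, Matrix.mulVec_mulVec, Matrix.mul_nonsing_inv _ (isUnit_iff_ne_zero.mpr hdet),
    Matrix.one_mulVec]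

lemma inner_interp_left (hk : ∀ y z, (inner ℝ (K y) (K z) : ℝ) = k y z)
    {F : Finset V} {x : V} (hx : x ∈ F) (h : H)
    (hh : ∀ z : F, (inner ℝ (K z) h : ℝ) = deltaVec F x z) :
    (inner ℝ (interp k K F x) h : ℝ) = coeffs k F x ⟨x, hx⟩ := by
  have h1 : (inner ℝ (interp k K F x) h : ℝ)
      = ∑ i : F, coeffs k F x i * deltaVec F x i := by
    simp only [interp, sum_inner, real_inner_smul_left]
    exact Finset.sum_congr rfl fun i _ => by rw [hh i]
  rw [h1]
  have : ∀ i : F, coeffs k F x i * deltaVec F x i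
      = if i = (⟨x, hx⟩ : F) then coeffs k F x i else 0 := by
    intro i
    by_cases hi : i = (⟨x, hx⟩ : F)
    · simp [hi, deltaVec]
    · have : (i : V) ≠ x := fun hc => hi (Subtype.ext hc)
      simp [deltaVec, this, hi]
  rw [Finset.sum_congr rfl fun i _ => this i, Finset.sum_ite_eq' Finset.univ]
  simp

lemma normsq_interp (hk : ∀ y z, (inner ℝ (K y) (K z) : ℝ) = k y z)
    {F : Finset V} (hdet : (gramMat k F).det ≠ 0) {x : V} (hx : x ∈ F) :
    (inner ℝ (interp k K F x) (interp k K F x) : ℝ) = coeffs k F x ⟨x, hx⟩ :=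
  inner_interp_left hk hx _ (fun z => inner_interp hk hdet x z)

/-- minimal norm property -/
lemma interp_le (hk : ∀ y z, (inner ℝ (K y) (K z) : ℝ) = k y z)
    {F : Finset V} (hdet : (gramMat k F).det ≠ 0) {x : V} (hx : x ∈ F) (h : H)
    (hh : ∀ z : F, (inner ℝ (K z) h : ℝ) = deltaVec F x z) :
    ‖h‖ ^ 2 = ‖interp k K F x‖ ^ 2 + ‖h - interp k K F x‖ ^ 2 := by
  have horth : (inner ℝ (interp k K F x) (h - interp k K F x) : ℝ) = 0 := by
    rw [inner_sub_right, inner_interp_left hk hx h hh, normsq_interp hk hdet hx, sub_self]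
  have key := norm_add_sq_real (interp k K F x) (h - interp k K F x)
  rw [horth] at key
  have hsum : interp k K F x + (h - interp k K F x) = h := by abel
  rw [hsum] at key
  rw [key]; ring

/-- Cramer: the diagonal entry of the inverse is the ratio of determinants. -/
lemma inv_diag_eq (k : V → V → ℝ) {F : Finset V} {x : V} (hx : x ∈ F)
    (hdet : (gramMat k F).det ≠ 0) :
    (gramMat k F)⁻¹ ⟨x, hx⟩ ⟨x, hx⟩ =
      (Matrix.of fun i j : {y : F // (y : V) ≠ x} => k i j).det / (gramMat k F).det := by
  set a : F := ⟨x, hx⟩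
  have h1 : (gramMat k F)⁻¹ a a = (gramMat k F).det⁻¹ * adjugate (gramMat k F) a a := by
    rw [Matrix.inv_def, Matrix.smul_apply, smul_eq_mul, Ring.inverse_eq_inv]
  rw [h1, adjugate_apply]
  set M : Matrix F F ℝ := (gramMat k F).updateRow a (Pi.single a 1) with hM
  have hblock : M.det = (M.toSquareBlockProp fun i => ¬ i = a).det *
      (M.toSquareBlockProp fun i => ¬ ¬ i = a).det := by
    apply Matrix.twoBlockTriangular_det
    intro i hi j hj
    have hia : i = a := not_not.mp hi
    rw [hM, hia, Matrix.updateRow_self]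
    exact Pi.single_eq_of_ne hj 1
  have h3 : (M.toSquareBlockProp fun i => ¬ ¬ i = a).det = 1 := by
    letI : Unique {i : F // ¬ ¬ i = a} := ⟨⟨⟨a, not_not_intro rfl⟩⟩,
      fun j => Subtype.ext (not_not.mp j.2)⟩
    rw [Matrix.det_unique]
    have : (default : {i : F // ¬ ¬ i = a}) = ⟨a, not_not_intro rfl⟩ := rfl
    simp [Matrix.toSquareBlockProp, this, hM, Matrix.updateRow_self]
  have h4 : (M.toSquareBlockProp fun i => ¬ i = a).det =
      (Matrix.of fun i j : {y : F // (y : V) ≠ x} => k i j).det := by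
    have hiff : ∀ y : F, ((y : V) ≠ x) ↔ ¬ y = a :=
      fun y => ⟨fun hy hc => hy (by rw [hc]), fun hy hc => hy (Subtype.ext hc)⟩
    rw [← Matrix.det_submatrix_equiv_self (Equiv.subtypeEquivRight hiff)
      (M.toSquareBlockProp fun i => ¬ i = a)]
    congr 1
    ext i j
    have hia : ((⟨(i : F), (hiff i).mp i.2⟩ : {i : F // ¬ i = a}) : F) ≠ a :=
      (hiff i).mp i.2
    simp only [Matrix.submatrix_apply, Equiv.subtypeEquivRight_apply,
      Matrix.toSquareBlockProp, Matrix.toBlock_apply, Matrix.of_apply, hM]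
    rw [Matrix.updateRow_ne hia]
    rfl
  rw [hblock, h3, h4, mul_one, div_eq_inv_mul]

lemma coeffs_x (k : V → V → ℝ) {F : Finset V} {x : V} (hx : x ∈ F) :
    coeffs k F x ⟨x, hx⟩ = (gramMat k F)⁻¹ ⟨x, hx⟩ ⟨x, hx⟩ := by
  simp only [coeffs, Matrix.mulVec, dotProduct, deltaVec]
  have h : ∀ j : F, (gramMat k F)⁻¹ ⟨x, hx⟩ j * (if (j : V) = x then 1 else 0)
      = if j = (⟨x, hx⟩ : F) then (gramMat k F)⁻¹ ⟨x, hx⟩ j else 0 := by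
    intro j
    by_cases hj : j = (⟨x, hx⟩ : F)
    · simp [hj]
    · have : (j : V) ≠ x := fun hc => hj (Subtype.ext hc)
      simp [this, hj]
  rw [Finset.sum_congr rfl fun j _ => h j, Finset.sum_ite_eq' Finset.univ]
  simp

end Aux

/-- Let `k` be strictly positive (all finite Gram determinants
positive) on countable `V`, with RKHS `H` (kernel vectors `K y`,
`⟪K y, K z⟫ = k y z`, dense span). For fixed `x ∈ V`, write `D_F = det K_F`
and `D'_F` for the determinant of the minor of `K_F` obtained by deleting the
row and column indexed by `x`. Then `δ_x ∈ H` iff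
`sup_{F ∋ x} D'_F / D_F < ∞` (i.e. the ratios are bounded above). -/
theorem stmt_5 {V H : Type*} [Countable V] [DecidableEq V]
    [NormedAddCommGroup H] [InnerProductSpace ℝ H] [CompleteSpace H]
    (k : V → V → ℝ) (K : V → H)
    (hk : ∀ y z, (inner ℝ (K y) (K z) : ℝ) = k y z)
    (hdense : (Submodule.span ℝ (Set.range K)).topologicalClosure = ⊤)
    (hstrict : ∀ F : Finset V, 0 < (Matrix.of fun i j : F => k i j).det)
    (x : V) :
    (∃ g : H, ∀ y, (inner ℝ (K y) g : ℝ) = if y = x then 1 else 0) ↔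
      ∃ C : ℝ, ∀ F : Finset V, x ∈ F →
        (Matrix.of fun i j : {y : F // (y : V) ≠ x} => k i j).det
          / (Matrix.of fun i j : F => k i j).det ≤ C := by
  have hdetne : ∀ F : Finset V, (gramMat k F).det ≠ 0 := fun F => ne_of_gt (hstrict F)
  have hnorm : ∀ (F : Finset V) (hxF : x ∈ F),
      ‖interp k K F x‖ ^ 2 =
        (Matrix.of fun i j : {y : F // (y : V) ≠ x} => k i j).det
          / (Matrix.of fun i j : F => k i j).det := by
    intro F hxF
    rw [← real_inner_self_eq_norm_sq, normsq_interp hk (hdetne F) hxF, coeffs_x,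
      inv_diag_eq k hxF (hdetne F)]
    rfl
  constructor
  · rintro ⟨g, hg⟩
    refine ⟨‖g‖ ^ 2, fun F hxF => ?_⟩
    rw [← hnorm F hxF]
    have hh : ∀ z : F, (inner ℝ (K z) g : ℝ) = deltaVec F x z := fun z => hg z
    have hle := interp_le hk (hdetne F) hxF g hh
    nlinarith [sq_nonneg ‖g - interp k K F x‖]
  · rintro ⟨C, hC⟩
    have hne : Nonempty V := ⟨x⟩
    obtain ⟨s, hs⟩ := exists_surjective_nat V
    set Fn : ℕ → Finset V := fun n => insert x ((Finset.range n).image s) with hFn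
    have hxF : ∀ n, x ∈ Fn n := fun n => Finset.mem_insert_self _ _
    have hmono : ∀ {n m : ℕ}, n ≤ m → Fn n ⊆ Fn m := fun {n m} h =>
      Finset.insert_subset_insert _
        (Finset.image_subset_image (by exact Finset.range_subset_range.mpr h))
    set gseq : ℕ → H := fun n => interp k K (Fn n) x with hgseq
    set aseq : ℕ → ℝ := fun n => ‖gseq n‖ ^ 2 with haseq
    have hval : ∀ (n : ℕ) (z : Fn n),
        (inner ℝ (K z) (gseq n) : ℝ) = deltaVec (Fn n) x z :=
      fun n z => inner_interp hk (hdetne (Fn n)) x z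
    have hdiff : ∀ {n m : ℕ}, n ≤ m → aseq m = aseq n + ‖gseq m - gseq n‖ ^ 2 := by
      intro n m hnm
      have hh : ∀ z : Fn n, (inner ℝ (K z) (gseq m) : ℝ) = deltaVec (Fn n) x z := by
        intro z
        have hz : (z : V) ∈ Fn m := hmono hnm z.2
        simpa [deltaVec] using hval m ⟨z, hz⟩
      exact interp_le hk (hdetne (Fn n)) (hxF n) (gseq m) hh
    have hmonoa : Monotone aseq := fun n m hnm => by
      rw [hdiff hnm]; nlinarith [sq_nonneg ‖gseq m - gseq n‖]
    have hub : ∀ n, aseq n ≤ C := by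
      intro n
      have h1 : aseq n = _ := hnorm (Fn n) (hxF n)
      rw [h1]
      exact hC (Fn n) (hxF n)
    have hbdd : BddAbove (Set.range aseq) := ⟨C, by rintro _ ⟨n, rfl⟩; exact hub n⟩
    set L := ⨆ n, aseq n with hL
    have haL : Filter.Tendsto aseq Filter.atTop (nhds L) := tendsto_atTop_ciSup hmonoa hbdd
    have hle_L : ∀ n, aseq n ≤ L := fun n => le_ciSup hbdd n
    have hcauchy : CauchySeq gseq := by
      apply cauchySeq_of_le_tendsto_0 (fun n => Real.sqrt (L - aseq n)) ?_ ?_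
      · have key : ∀ p q N : ℕ, p ≤ q → N ≤ p →
            dist (gseq p) (gseq q) ≤ Real.sqrt (L - aseq N) := by
          intro p q N hpq hNp
          apply Real.le_sqrt_of_sq_le
          rw [dist_eq_norm, ← norm_neg, neg_sub]
          have h1 := hdiff hpq
          have h2 := hmonoa hNp
          have h3 := hle_L q
          linarith
        intro n m N hn hm
        rcases le_total n m with h | h
        · exact key n m N h hn
        · rw [dist_comm]; exact key m n N h hm
      · have h1 : Filter.Tendsto (fun n => L - aseq n) Filter.atTop (nhds (L - L)) :=
          tendsto_const_nhds.sub haL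
        rw [sub_self] at h1
        have h2 := (Real.continuous_sqrt.tendsto 0).comp h1
        rw [Real.sqrt_zero] at h2
        exact h2
    obtain ⟨g, hg⟩ := cauchySeq_tendsto_of_complete hcauchy
    refine ⟨g, fun y => ?_⟩
    obtain ⟨m, hm⟩ := hs y
    have hy : y ∈ Fn (m + 1) :=
      Finset.mem_insert_of_mem
        (Finset.mem_image.mpr ⟨m, Finset.mem_range.mpr (Nat.lt_succ_self m), hm⟩)
    have h1 : Filter.Tendsto (fun n => (inner ℝ (K y) (gseq n) : ℝ)) Filter.atTop
        (nhds (inner ℝ (K y) g)) := Filter.Tendsto.inner tendsto_const_nhds hg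
    have h2 : Filter.Tendsto (fun n => (inner ℝ (K y) (gseq n) : ℝ)) Filter.atTop
        (nhds (if y = x then 1 else 0)) := by
      apply Filter.Tendsto.congr' _ tendsto_const_nhds
      filter_upwards [Filter.eventually_ge_atTop (m + 1)] with n hn
      have hyn : y ∈ Fn n := hmono hn hy
      simpa [deltaVec] using (hval n ⟨y, hyn⟩).symm
    exact tendsto_nhds_unique h1 h2
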